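/- The accelerated gossip iterates contract towards consensus: for every T ≥ 0 it holds that ‖y^T − x̄‖₂² ≤ 2χ·(1 − 1/√χ)^T·‖x⁰ − x̄‖₂². -/

import Mathlib

open Matrix Finset

/-- symmetry of quadratic/bilinear form -/
lemma dot_mulVec_symm {n : ℕ} {B : Matrix (Fin n) (Fin n) ℝ} (hsym : Bᵀ = B)
    (u v : Fin n → ℝ) : u ⬝ᵥ (B *ᵥ v) = v ⬝ᵥ (B *ᵥ u) := by
  rw [dotProduct_mulVec u B v, show u ᵥ* B = B *ᵥ u by
    nth_rewrite 1 [← hsym]; rw [vecMul_transpose], dotProduct_comm]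

lemma lap_form_mono {n : ℕ} {H K : SimpleGraph (Fin n)} [DecidableRel H.Adj]
    [DecidableRel K.Adj] (h : H ≤ K) (v : Fin n → ℝ) :
    v ⬝ᵥ (H.lapMatrix ℝ *ᵥ v) ≤ v ⬝ᵥ (K.lapMatrix ℝ *ᵥ v) := by
  rw [← toLinearMap₂'_apply', ← toLinearMap₂'_apply',
    SimpleGraph.lapMatrix_toLinearMap₂', SimpleGraph.lapMatrix_toLinearMap₂']
  gcongr with i _ j _
  by_cases hH : H.Adj i j
  · rw [if_pos hH, if_pos (h hH)]
  · rw [if_neg hH]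
    positivity

lemma lap_form_nonneg {n : ℕ} (H : SimpleGraph (Fin n)) [DecidableRel H.Adj]
    (v : Fin n → ℝ) : 0 ≤ v ⬝ᵥ (H.lapMatrix ℝ *ᵥ v) := by
  rw [← toLinearMap₂'_apply', SimpleGraph.lapMatrix_toLinearMap₂']
  positivity

lemma lap_mulVec_sum {n : ℕ} (H : SimpleGraph (Fin n)) [DecidableRel H.Adj]
    (v : Fin n → ℝ) : ∑ i, (H.lapMatrix ℝ *ᵥ v) i = 0 := by
  have h1 : ∑ i, (H.lapMatrix ℝ *ᵥ v) i = (fun _ => (1:ℝ)) ⬝ᵥ (H.lapMatrix ℝ *ᵥ v) := by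
    simp [dotProduct]
  rw [h1, dot_mulVec_symm (H.isSymm_lapMatrix (R := ℝ)) _ v,
    H.lapMatrix_mulVec_const_eq_zero, dotProduct_zero]

/-- the one-step Nesterov potential contraction for quadratics. -/
lemma nesterov_step {n : ℕ} (B : Matrix (Fin n) (Fin n) ℝ) (hsym : Bᵀ = B)
    (L μ τ : ℝ) (hL : 0 < L) (hτ0 : 0 < τ) (hτ1 : τ < 1) (hμτ : μ = τ^2 * L)
    (a b : Fin n → ℝ)
    (hub : ∀ v : Fin n → ℝ, v ⬝ᵥ (B *ᵥ v) ≤ L * (v ⬝ᵥ v))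
    (hlb : μ * (a ⬝ᵥ a) ≤ a ⬝ᵥ (B *ᵥ a))
    (hpsd : ∀ v : Fin n → ℝ, 0 ≤ v ⬝ᵥ (B *ᵥ v)) :
    (a - (1/L) • (B *ᵥ a)) ⬝ᵥ (B *ᵥ (a - (1/L) • (B *ᵥ a)))
      + L * ((a - (1/L) • (B *ᵥ a) - (1-τ) • b) ⬝ᵥ (a - (1/L) • (B *ᵥ a) - (1-τ) • b))
    ≤ (1-τ) * (b ⬝ᵥ (B *ᵥ b) + L * (((1+τ) • a - b) ⬝ᵥ ((1+τ) • a - b))) := by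
  have hLne : L ≠ 0 := ne_of_gt hL
  set c : Fin n → ℝ := B *ᵥ a with hc
  set d : Fin n → ℝ := B *ᵥ b with hd
  set e : Fin n → ℝ := B *ᵥ c with he
  have hmv : B *ᵥ (a - (1/L) • c) = c - (1/L) • e := by
    rw [mulVec_sub, mulVec_smul, ← hc, ← he]
  have hae : a ⬝ᵥ e = c ⬝ᵥ c := by
    rw [he, dot_mulVec_symm hsym a c, ← hc]
  have had : a ⬝ᵥ d = b ⬝ᵥ c := by
    rw [hd, dot_mulVec_symm hsym a b, ← hc]
  -- scalar atoms
  have hba : b ⬝ᵥ a = a ⬝ᵥ b := dotProduct_comm _ _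
  have hca : c ⬝ᵥ a = a ⬝ᵥ c := dotProduct_comm _ _
  have hcb : c ⬝ᵥ b = b ⬝ᵥ c := dotProduct_comm _ _
  have hbc : b ⬝ᵥ c = b ⬝ᵥ c := rfl
  have g1 : (a - (1/L) • c) ⬝ᵥ (B *ᵥ (a - (1/L) • c))
      = a ⬝ᵥ c - (2/L) * (c ⬝ᵥ c) + (1/L^2) * (c ⬝ᵥ e) := by
    rw [hmv]
    simp only [dotProduct_sub, sub_dotProduct, dotProduct_smul, smul_dotProduct,
      smul_eq_mul, hae, hca]
    ring
  have g2 : (a - (1/L) • c - (1-τ) • b) ⬝ᵥ (a - (1/L) • c - (1-τ) • b)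
      = a ⬝ᵥ a - (2/L) * (a ⬝ᵥ c) - 2*(1-τ) * (a ⬝ᵥ b) + (1/L^2) * (c ⬝ᵥ c)
        + (2*(1-τ)/L) * (b ⬝ᵥ c) + (1-τ)^2 * (b ⬝ᵥ b) := by
    simp only [dotProduct_sub, sub_dotProduct, dotProduct_smul, smul_dotProduct,
      smul_eq_mul, hba, hca, hcb]
    ring
  have g3 : ((1+τ) • a - b) ⬝ᵥ ((1+τ) • a - b)
      = (1+τ)^2 * (a ⬝ᵥ a) - 2*(1+τ) * (a ⬝ᵥ b) + b ⬝ᵥ b := by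
    simp only [dotProduct_sub, sub_dotProduct, dotProduct_smul, smul_dotProduct,
      smul_eq_mul, hba]
    ring
  have F1 : 0 ≤ a ⬝ᵥ c - 2 * (b ⬝ᵥ c) + b ⬝ᵥ d := by
    have := hpsd (a - b)
    rw [show B *ᵥ (a - b) = c - d by rw [mulVec_sub]] at this
    simp only [dotProduct_sub, sub_dotProduct, had, hcb] at this
    linarith
  have F2 : 0 ≤ a ⬝ᵥ a - 2 * (a ⬝ᵥ b) + b ⬝ᵥ b := by
    have h : 0 ≤ (a - b) ⬝ᵥ (a - b) := Finset.sum_nonneg fun i _ => mul_self_nonneg _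
    simp only [dotProduct_sub, sub_dotProduct, hba] at h
    linarith
  have F3 : c ⬝ᵥ e ≤ L * (c ⬝ᵥ c) := hub c
  have F4 : μ * (a ⬝ᵥ a) ≤ a ⬝ᵥ c := hlb
  rw [g1, g2, g3]
  have key : (1-τ) * (b ⬝ᵥ d + L * ((1+τ)^2 * (a ⬝ᵥ a) - 2*(1+τ) * (a ⬝ᵥ b) + b ⬝ᵥ b))
      - (a ⬝ᵥ c - (2/L) * (c ⬝ᵥ c) + (1/L^2) * (c ⬝ᵥ e)
        + L * (a ⬝ᵥ a - (2/L) * (a ⬝ᵥ c) - 2*(1-τ) * (a ⬝ᵥ b) + (1/L^2) * (c ⬝ᵥ c)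
          + (2*(1-τ)/L) * (b ⬝ᵥ c) + (1-τ)^2 * (b ⬝ᵥ b)))
      = (1-τ) * (a ⬝ᵥ c - 2 * (b ⬝ᵥ c) + b ⬝ᵥ d)
        + (1-τ)*τ*L * (a ⬝ᵥ a - 2 * (a ⬝ᵥ b) + b ⬝ᵥ b)
        + (1/L^2) * (L * (c ⬝ᵥ c) - c ⬝ᵥ e)
        + τ * (a ⬝ᵥ c - μ * (a ⬝ᵥ a)) := by
    rw [hμτ]; field_simp; ring
  have t1 : 0 ≤ (1-τ) * (a ⬝ᵥ c - 2 * (b ⬝ᵥ c) + b ⬝ᵥ d) :=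
    mul_nonneg (by linarith) F1
  have t2 : 0 ≤ (1-τ)*τ*L * (a ⬝ᵥ a - 2 * (a ⬝ᵥ b) + b ⬝ᵥ b) :=
    mul_nonneg (mul_nonneg (mul_nonneg (by linarith) hτ0.le) hL.le) F2
  have t3 : 0 ≤ (1/L^2) * (L * (c ⬝ᵥ c) - c ⬝ᵥ e) :=
    mul_nonneg (by positivity) (by linarith)
  have t4 : 0 ≤ τ * (a ⬝ᵥ c - μ * (a ⬝ᵥ a)) := mul_nonneg hτ0.le (by linarith)
  linarith
theorem accelerated_gossip_contraction
    (n : ℕ) (hn : 0 < n)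
    (G : ℕ → SimpleGraph (Fin n)) [instG : ∀ k, DecidableRel (G k).Adj]
    (skel : SimpleGraph (Fin n)) [instS : DecidableRel skel.Adj]
    (hconn : skel.Connected) (hskel : ∀ k, skel ≤ G k)
    (lammax lammin : ℝ) (hlammin : 0 < lammin)
    (hmax : ∀ k (v : Fin n → ℝ), v ⬝ᵥ ((G k).lapMatrix ℝ *ᵥ v) ≤ lammax * (v ⬝ᵥ v))
    (hmin : ∀ v : Fin n → ℝ, (∑ i, v i) = 0 →
      lammin * (v ⬝ᵥ v) ≤ v ⬝ᵥ (skel.lapMatrix ℝ *ᵥ v))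
    (χ : ℝ) (hχdef : χ = lammax / lammin) (hχ : 1 < χ)
    (hatG : ℕ → SimpleGraph (Fin n)) [instH : ∀ k, DecidableRel (hatG k).Adj]
    (hhatG : ∀ k u v, (hatG k).Adj u v ↔ ∀ j ≤ k, (G j).Adj u v)
    (W : ℕ → Matrix (Fin n) (Fin n) ℝ) (hW : ∀ k, W k = (hatG k).lapMatrix ℝ)
    (η β : ℝ)
    (hη : η = 1 / lammax) (hβ : β = (Real.sqrt χ - 1) / (Real.sqrt χ + 1))
    (x0 : Fin n → ℝ) (x y : ℕ → Fin n → ℝ)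
    (hx0 : x 0 = x0) (hy0 : y 0 = x0)
    (hyup : ∀ k, y (k + 1) = x k - η • (W k *ᵥ x k))
    (hxup : ∀ k, x (k + 1) = (1 + β) • y (k + 1) - β • y k)
    (xbar : Fin n → ℝ) (hxbar : ∀ i, xbar i = (∑ j, x0 j) / n) :
    ∀ T : ℕ,
      ∑ i, (y T i - xbar i) ^ 2 ≤
        2 * χ * (1 - 1 / Real.sqrt χ) ^ T * ∑ i, (x0 i - xbar i) ^ 2 := by
  intro T
  have hχ0 : (0:ℝ) < χ := lt_trans one_pos hχ
  have hs1 : 1 < Real.sqrt χ := by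
    rw [show (1:ℝ) = Real.sqrt 1 by simp]
    exact Real.sqrt_lt_sqrt (by norm_num) hχ
  have hs0 : 0 < Real.sqrt χ := lt_trans one_pos hs1
  have hss : Real.sqrt χ ^ 2 = χ := Real.sq_sqrt hχ0.le
  set τ : ℝ := 1 / Real.sqrt χ with hτdef
  have hτ0 : 0 < τ := by positivity
  have hτ1 : τ < 1 := by
    rw [hτdef, div_lt_one hs0]; exact hs1
  have hlmax : lammax = χ * lammin := by
    field_simp [ne_of_gt hlammin] at hχdef
    linarith [hχdef]
  have hL : 0 < lammax := by rw [hlmax]; positivity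
  have hμτ : lammin = τ ^ 2 * lammax := by
    rw [hτdef, hlmax, div_pow, one_pow, hss]
    field_simp
  have hβ' : β = (1 - τ) / (1 + τ) := by
    rw [hβ, hτdef, div_eq_div_iff (by positivity) (by positivity)]
    field_simp
  have h1τ : (0:ℝ) < 1 + τ := by linarith
  -- error vectors
  set a : ℕ → Fin n → ℝ := fun k => x k - xbar with hadef
  set b : ℕ → Fin n → ℝ := fun k => y k - xbar with hbdef
  -- facts about W
  have hWsym : ∀ k, (W k)ᵀ = W k := fun k => by rw [hW]; exact (hatG k).isSymm_lapMatrix (R := ℝ)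
  have hhatG_le_G : ∀ k, hatG k ≤ G k := fun k u v h => ((hhatG k u v).1 h) k le_rfl
  have hskel_le : ∀ k, skel ≤ hatG k := fun k u v h =>
    (hhatG k u v).2 fun j _ => (hskel j) h
  have hanti : ∀ k, hatG (k+1) ≤ hatG k := fun k u v h =>
    (hhatG k u v).2 fun j hj => ((hhatG (k+1) u v).1 h) j (hj.trans (Nat.le_succ k))
  have hub : ∀ k (v : Fin n → ℝ), v ⬝ᵥ (W k *ᵥ v) ≤ lammax * (v ⬝ᵥ v) := fun k v => by
    rw [hW]; exact (lap_form_mono (hhatG_le_G k) v).trans (hmax k v)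
  have hlbW : ∀ k (v : Fin n → ℝ), (∑ i, v i) = 0 →
      lammin * (v ⬝ᵥ v) ≤ v ⬝ᵥ (W k *ᵥ v) := fun k v hv => by
    rw [hW]; exact (hmin v hv).trans (lap_form_mono (hskel_le k) v)
  have hmono : ∀ k (v : Fin n → ℝ), v ⬝ᵥ (W (k+1) *ᵥ v) ≤ v ⬝ᵥ (W k *ᵥ v) := fun k v => by
    rw [hW, hW]; exact lap_form_mono (hanti k) v
  have hpsdW : ∀ k (v : Fin n → ℝ), 0 ≤ v ⬝ᵥ (W k *ᵥ v) := fun k v => by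
    rw [hW]; exact lap_form_nonneg _ v
  have hWsum : ∀ k (v : Fin n → ℝ), ∑ i, (W k *ᵥ v) i = 0 := fun k v => by
    rw [hW]; exact lap_mulVec_sum _ v
  have hWconst : ∀ k, W k *ᵥ xbar = 0 := by
    intro k
    have hx : xbar = ((∑ j, x0 j) / n) • (fun _ => (1:ℝ)) := by
      funext i; rw [hxbar]; simp
    rw [hx, mulVec_smul, hW, SimpleGraph.lapMatrix_mulVec_const_eq_zero, smul_zero]
  -- recurrences
  have hbrec : ∀ k, b (k+1) = a k - (1/lammax) • (W k *ᵥ a k) := by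
    intro k
    have hxa : W k *ᵥ x k = W k *ᵥ a k := by
      have : x k = a k + xbar := by simp [hadef]
      rw [this, mulVec_add, hWconst, add_zero]
    show y (k+1) - xbar = a k - (1/lammax) • (W k *ᵥ a k)
    rw [hyup k, hxa, hη]
    show x k - (1/lammax) • (W k *ᵥ a k) - xbar = (x k - xbar) - (1/lammax) • (W k *ᵥ a k)
    abel
  have harec : ∀ k, a (k+1) = (1+β) • b (k+1) - β • b k := by
    intro k
    show x (k+1) - xbar = (1+β) • (y (k+1) - xbar) - β • (y k - xbar)
    rw [hxup k]
    funext i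
    simp only [Pi.sub_apply, Pi.smul_apply, smul_eq_mul]
    ring
  have hzrec : ∀ k, (1+τ) • a (k+1) - b (k+1) = b (k+1) - (1-τ) • b k := by
    intro k
    rw [harec k, smul_sub, smul_smul, smul_smul]
    have h2 : (1+τ) * (1+β) = 2 := by
      rw [hβ']; field_simp; ring
    have h3 : (1+τ) * β = 1 - τ := by
      rw [hβ']; field_simp
    rw [h2, h3, two_smul]
    abel
  -- zero-sum facts
  have hsum0 : ∑ i, (x0 i - xbar i) = 0 := by
    have hn' : (n:ℝ) ≠ 0 := Nat.cast_ne_zero.mpr hn.ne'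
    simp only [Finset.sum_sub_distrib]
    have : ∑ i : Fin n, xbar i = ∑ j, x0 j := by
      simp only [hxbar, Finset.sum_const, Finset.card_fin, nsmul_eq_mul]
      field_simp
    rw [this, sub_self]
  have hsum : ∀ k, (∑ i, a k i = 0) ∧ (∑ i, b k i = 0) := by
    intro k
    induction k with
    | zero =>
      constructor
      · show ∑ i, (x 0 - xbar) i = 0
        rw [hx0]; exact hsum0
      · show ∑ i, (y 0 - xbar) i = 0
        rw [hy0]; exact hsum0
    | succ k ih =>
      have hb' : ∑ i, b (k+1) i = 0 := by
        rw [hbrec k]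
        simp only [Pi.sub_apply, Pi.smul_apply, smul_eq_mul, Finset.sum_sub_distrib,
          ← Finset.mul_sum, hWsum k (a k), ih.1]
        ring
      refine ⟨?_, hb'⟩
      rw [harec k]
      simp only [Pi.sub_apply, Pi.smul_apply, smul_eq_mul, Finset.sum_sub_distrib,
        ← Finset.mul_sum, hb', ih.2]
      ring
  -- the potential
  set Φ : ℕ → ℝ := fun k => (b k) ⬝ᵥ (W k *ᵥ b k)
      + lammax * (((1+τ) • a k - b k) ⬝ᵥ ((1+τ) • a k - b k)) with hΦ
  have hdotnn : ∀ v : Fin n → ℝ, 0 ≤ v ⬝ᵥ v :=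
    fun v => Finset.sum_nonneg fun i _ => mul_self_nonneg _
  have hstep : ∀ k, Φ (k+1) ≤ (1-τ) * Φ k := by
    intro k
    have key := nesterov_step (W k) (hWsym k) lammax lammin τ hL hτ0 hτ1 hμτ
      (a k) (b k) (hub k) (hlbW k (a k) (hsum k).1) (hpsdW k)
    have hb' := hbrec k
    calc Φ (k+1) = b (k+1) ⬝ᵥ (W (k+1) *ᵥ b (k+1))
          + lammax * ((b (k+1) - (1-τ) • b k) ⬝ᵥ (b (k+1) - (1-τ) • b k)) := by
            rw [hΦ]; simp only []; rw [hzrec k]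
      _ ≤ b (k+1) ⬝ᵥ (W k *ᵥ b (k+1))
          + lammax * ((b (k+1) - (1-τ) • b k) ⬝ᵥ (b (k+1) - (1-τ) • b k)) := by
            have := hmono k (b (k+1)); linarith
      _ ≤ (1-τ) * Φ k := by
            rw [hb'] at *
            exact key
  have hdecay : ∀ k, Φ k ≤ (1-τ)^k * Φ 0 := by
    intro k
    induction k with
    | zero => simp
    | succ k ih =>
      calc Φ (k+1) ≤ (1-τ) * Φ k := hstep k
        _ ≤ (1-τ) * ((1-τ)^k * Φ 0) := by
            apply mul_le_mul_of_nonneg_left ih (by linarith)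
        _ = (1-τ)^(k+1) * Φ 0 := by ring
  -- initial bound
  set e : Fin n → ℝ := x0 - xbar with hedef
  have ha0 : a 0 = e := by show x 0 - xbar = e; rw [hx0]
  have hb0 : b 0 = e := by show y 0 - xbar = e; rw [hy0]
  have hΦ0 : Φ 0 ≤ (lammax + lammin) * (e ⬝ᵥ e) := by
    rw [hΦ]
    simp only [ha0, hb0]
    have h1 : (1+τ) • e - e = τ • e := by
      rw [add_smul, one_smul]; abel
    rw [h1]
    have h2 : (τ • e) ⬝ᵥ (τ • e) = τ^2 * (e ⬝ᵥ e) := by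
      rw [smul_dotProduct, dotProduct_smul, smul_eq_mul, smul_eq_mul]; ring
    rw [h2]
    have h3 := hub 0 e
    have h4 : lammax * (τ^2 * (e ⬝ᵥ e)) = lammin * (e ⬝ᵥ e) := by
      rw [hμτ]; ring
    linarith
  -- final bound
  have hfin : lammin * (b T ⬝ᵥ b T) ≤ Φ T := by
    have h1 := hlbW T (b T) (hsum T).2
    have h2 : 0 ≤ lammax * (((1+τ) • a T - b T) ⬝ᵥ ((1+τ) • a T - b T)) :=
      mul_nonneg hL.le (hdotnn _)
    rw [hΦ]; dsimp only; linarith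
  have hpow : (0:ℝ) ≤ (1-τ)^T := pow_nonneg (by linarith) T
  have hchain : lammin * (b T ⬝ᵥ b T) ≤ (1-τ)^T * ((lammax + lammin) * (e ⬝ᵥ e)) := by
    calc lammin * (b T ⬝ᵥ b T) ≤ Φ T := hfin
      _ ≤ (1-τ)^T * Φ 0 := hdecay T
      _ ≤ (1-τ)^T * ((lammax + lammin) * (e ⬝ᵥ e)) :=
          mul_le_mul_of_nonneg_left hΦ0 hpow
  -- convert to goal
  have hgl : ∑ i, (y T i - xbar i) ^ 2 = b T ⬝ᵥ b T := by
    simp only [hbdef, dotProduct, Pi.sub_apply, sq]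
  have hgr : ∑ i, (x0 i - xbar i) ^ 2 = e ⬝ᵥ e := by
    simp only [hedef, dotProduct, Pi.sub_apply, sq]
  rw [hgl, hgr]
  have hee : 0 ≤ e ⬝ᵥ e := hdotnn e
  have hlm2 : lammax + lammin ≤ 2 * χ * lammin := by
    rw [hlmax]; nlinarith
  have hfinal : lammin * (b T ⬝ᵥ b T) ≤ lammin * (2 * χ * (1-τ)^T * (e ⬝ᵥ e)) := by
    calc lammin * (b T ⬝ᵥ b T) ≤ (1-τ)^T * ((lammax + lammin) * (e ⬝ᵥ e)) := hchain
      _ ≤ (1-τ)^T * ((2 * χ * lammin) * (e ⬝ᵥ e)) := by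
          apply mul_le_mul_of_nonneg_left _ hpow
          exact mul_le_mul_of_nonneg_right hlm2 hee
      _ = lammin * (2 * χ * (1-τ)^T * (e ⬝ᵥ e)) := by ring
  have := (mul_le_mul_iff_right₀ hlammin).mp hfinal
  linarith
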